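/- arXiv:2504.16443 — 2 statements merged into one kernel-verified Lean document; each statement's English description precedes it below -/
import Mathlib

section
/- For two closed intervals P = [a,b] and G = [c,d] with a ≤ b and c ≤ d, the one-dimensional GIoU, defined as GIoU(P,G) = |P∩G|/|P∪G| − (|C| − |P∪G|)/|C| where C is the smallest interval containing both P and G, |P∩G| = max(0, min(b,d) − max(a,c)), |P∪G| = (b−a)+(d−c)−|P∩G|, and |C| = max(b,d) − min(a,c), satisfies GIoU(P,G) = (min(b,d) − max(a,c)) / (max(b,d) − min(a,c)), provided max(b,d) > min(a,c) and |P∪G| > 0. -/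
/-- Simplification of the one-dimensional GIoU formula: for intervals
`P = [a,b]` and `G = [c,d]`, the standard GIoU
`|P∩G|/|P∪G| − (|C| − |P∪G|)/|C|` equals
`(min b d − max a c) / (max b d − min a c)`. -/
theorem giou1d_simplification (a b c d : ℝ) (hab : a ≤ b) (hcd : c ≤ d)
    (hC : max b d - min a c > 0)
    (hU : (b - a) + (d - c) - max 0 (min b d - max a c) > 0) :
    (max 0 (min b d - max a c)) / ((b - a) + (d - c) - max 0 (min b d - max a c))
      - ((max b d - min a c) - ((b - a) + (d - c) - max 0 (min b d - max a c)))
          / (max b d - min a c)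
      = (min b d - max a c) / (max b d - min a c) := by
  have key : (b - a) + (d - c) - (min b d - max a c) = max b d - min a c := by
    rcases le_total b d with h | h <;> rcases le_total a c with h' | h' <;>
      simp [min_eq_left, min_eq_right, max_eq_left, max_eq_right, h, h'] <;> ring
  rcases le_or_gt 0 (min b d - max a c) with h | h
  · rw [max_eq_right h]
    rw [key]
    field_simp
    ring
  · rw [max_eq_left h.le] at *
    have : (max b d - min a c) - ((b - a) + (d - c) - 0) = -(min b d - max a c) := by
      linarith [key]
    rw [this]
    field_simp
    ring
end

section
/- The 1D GIoU distance d(P,G) = 1 − GIoU¹ᴰ(P,G) on nonempty closed intervals satisfies the triangle inequality: for intervals P, Q, R with positive length, d(P,R) ≤ d(P,Q) + d(Q,R). -/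
lemma giou_pair (a b a' b' : ℝ) (h : a < b) (h' : a' < b') :
    1 - (min b b' - max a a') / (max b b' - min a a')
      = 2 * (|a - a'| + |b - b'|) / ((b - a) + (b' - a') + (|a - a'| + |b - b'|)) := by
  have hM : max b b' - min a a' = ((b - a) + (b' - a') + (|a - a'| + |b - b'|)) / 2 := by
    rcases le_total a a' with ha | ha <;> rcases le_total b b' with hb | hb <;>
      simp [max_eq_right, max_eq_left, min_eq_left, min_eq_right, ha, hb,
        abs_of_nonneg, abs_of_nonpos, sub_nonneg, sub_nonpos] <;> ring_nf <;> linarith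
  have hm : min b b' - max a a' = (max b b' - min a a') - (|a - a'| + |b - b'|) := by
    rcases le_total a a' with ha | ha <;> rcases le_total b b' with hb | hb <;>
      simp [max_eq_right, max_eq_left, min_eq_left, min_eq_right, ha, hb,
        abs_of_nonneg, abs_of_nonpos, sub_nonneg, sub_nonpos] <;> ring_nf <;> linarith
  have hMpos : 0 < max b b' - min a a' := by
    have : b - a ≤ max b b' - min a a' := by
      have := le_max_left b b'; have := min_le_left a a'; linarith
    linarith
  have hS : (0:ℝ) < (b - a) + (b' - a') + (|a - a'| + |b - b'|) := by
    have := abs_nonneg (a - a'); have := abs_nonneg (b - b'); linarith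
  rw [hm, hM]
  have h2 : ((b - a) + (b' - a') + (|a - a'| + |b - b'|)) ≠ 0 := ne_of_gt hS
  field_simp
  ring

lemma giou_core (L1 L2 L3 u v w : ℝ) (hL1 : 0 < L1) (hL2 : 0 < L2) (hL3 : 0 < L3)
    (hu : 0 ≤ u) (hv : 0 ≤ v) (hw : 0 ≤ w)
    (htri : w ≤ u + v) (h21 : L2 ≤ L1 + u) (h23 : L2 ≤ L3 + v) :
    2 * w / (L1 + L3 + w) ≤ 2 * u / (L1 + L2 + u) + 2 * v / (L2 + L3 + v) := by
  have d1 : (0:ℝ) < L1 + L3 + w := by linarith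
  have d2 : (0:ℝ) < L1 + L2 + u := by linarith
  have d3 : (0:ℝ) < L2 + L3 + v := by linarith
  have d4 : (0:ℝ) < L1 + L3 + (u + v) := by linarith
  have step1 : 2 * w / (L1 + L3 + w) ≤ 2 * (u + v) / (L1 + L3 + (u + v)) := by
    rw [div_le_div_iff₀ d1 d4]
    nlinarith [mul_nonneg hw (sub_nonneg.2 htri)]
  have step2 : 2 * u / (L1 + L3 + (u + v)) ≤ 2 * u / (L1 + L2 + u) := by
    apply div_le_div_of_nonneg_left (by linarith) d2 (by linarith)
  have step3 : 2 * v / (L1 + L3 + (u + v)) ≤ 2 * v / (L2 + L3 + v) := by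
    apply div_le_div_of_nonneg_left (by linarith) d3 (by linarith)
  calc 2 * w / (L1 + L3 + w) ≤ 2 * (u + v) / (L1 + L3 + (u + v)) := step1
    _ = 2 * u / (L1 + L3 + (u + v)) + 2 * v / (L1 + L3 + (u + v)) := by ring
    _ ≤ 2 * u / (L1 + L2 + u) + 2 * v / (L2 + L3 + v) := add_le_add step2 step3

/-- The 1D GIoU distance `d(P,G) = 1 − GIoU¹ᴰ(P,G)` satisfies the triangle
inequality on nondegenerate intervals. -/
theorem giou1d_dist_triangle (a₁ b₁ a₂ b₂ a₃ b₃ : ℝ)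
    (h₁ : a₁ < b₁) (h₂ : a₂ < b₂) (h₃ : a₃ < b₃) :
    1 - (min b₁ b₃ - max a₁ a₃) / (max b₁ b₃ - min a₁ a₃)
      ≤ (1 - (min b₁ b₂ - max a₁ a₂) / (max b₁ b₂ - min a₁ a₂))
        + (1 - (min b₂ b₃ - max a₂ a₃) / (max b₂ b₃ - min a₂ a₃)) := by
  rw [giou_pair a₁ b₁ a₃ b₃ h₁ h₃, giou_pair a₁ b₁ a₂ b₂ h₁ h₂, giou_pair a₂ b₂ a₃ b₃ h₂ h₃]
  have habs : |a₁ - a₃| + |b₁ - b₃| ≤ (|a₁ - a₂| + |b₁ - b₂|) + (|a₂ - a₃| + |b₂ - b₃|) := by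
    have := abs_sub_le a₁ a₂ a₃
    have := abs_sub_le b₁ b₂ b₃
    linarith
  have h21 : b₂ - a₂ ≤ (b₁ - a₁) + (|a₁ - a₂| + |b₁ - b₂|) := by
    have := abs_le_abs_of_nonneg (le_of_lt (sub_pos.2 h₂)) (le_refl (b₂ - a₂))
    have h1 := le_abs_self (a₁ - a₂)
    have h2 := le_abs_self (b₂ - b₁)
    rw [abs_sub_comm b₂ b₁] at h2
    linarith
  have h23 : b₂ - a₂ ≤ (b₃ - a₃) + (|a₂ - a₃| + |b₂ - b₃|) := by
    have h1 := le_abs_self (a₃ - a₂)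
    rw [abs_sub_comm a₃ a₂] at h1
    have h2 := le_abs_self (b₂ - b₃)
    linarith
  exact giou_core (b₁ - a₁) (b₂ - a₂) (b₃ - a₃) _ _ _
    (by linarith) (by linarith) (by linarith)
    (by positivity) (by positivity) (by positivity)
    habs h21 h23
end
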